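/- Represent each k-of-N code by the strictly increasing tuple (a_1 < a_2 < ⋯ < a_k) of the positions of its ones, and order these tuples by the alternating lexicographic order: tuples are compared on a_1 in ascending order, ties are broken on a_2 in descending order, then on a_3 in ascending order, and so on (coordinate i is compared ascending when i is odd and descending when i is even). Then any two tuples that are consecutive in this total order correspond to k-of-N codes whose Hamming distance is exactly 2 (equivalently, the corresponding k-element subsets of {1,…,N} differ by exchanging exactly one element). -/

import Mathlib

/-- Alternating lexicographic order on strictly increasing `k`-tuples of positions:
tuples are compared on the first coordinate where they differ, ascending at
coordinates with even 0-based index (odd 1-based index) and descending at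
coordinates with odd 0-based index (even 1-based index). -/
def altLexLT {k N : ℕ} (a b : Fin k → Fin N) : Prop :=
  ∃ j : Fin k, (∀ i, i < j → a i = b i) ∧
    (if Even (j : ℕ) then a j < b j else b j < a j)

/-- The `k`-of-`N` code (bit vector of length `N`) whose ones are at the positions
listed by the tuple `a`. -/
def codeOf {k N : ℕ} (a : Fin k → Fin N) : Fin N → Bool :=
  fun p => decide (∃ i, a i = p)

section AltLexAux
variable {k N : ℕ}

private lemma gapAux {f : Fin k → Fin N} (hf : StrictMono f) :
    ∀ d : ℕ, ∀ i m : Fin k, (m : ℕ) = (i : ℕ) + d → (f i : ℕ) + d ≤ (f m : ℕ) := by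
  intro d
  induction d with
  | zero =>
    intro i m h
    have : i = m := Fin.ext (by omega)
    subst this; omega
  | succ d ih =>
    intro i m h
    have hm : (i:ℕ) + d < k := by have := m.isLt; omega
    have h1 := ih i ⟨(i:ℕ)+d, hm⟩ rfl
    have h2 : f ⟨(i:ℕ)+d, hm⟩ < f m := hf (by rw [Fin.lt_def]; simp; omega)
    rw [Fin.lt_def] at h2
    simp at h1 h2
    omega

private lemma valBound {f : Fin k → Fin N} (hf : StrictMono f) (i : Fin k) :
    (f i : ℕ) + (k - 1 - (i:ℕ)) < N := by
  have hk : 0 < k := i.pos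
  have hlast : k - 1 < k := by omega
  have h1 := gapAux hf (k - 1 - (i:ℕ)) i ⟨k-1, hlast⟩ (by have := i.isLt; simp; omega)
  have h2 := (f ⟨k-1, hlast⟩).isLt
  omega

private lemma tail_forced {f : Fin k → Fin N} (hf : StrictMono f) (hkN : k ≤ N) (m : Fin k)
    (hm : (f m : ℕ) = N - k + (m:ℕ)) :
    ∀ i : Fin k, (m:ℕ) ≤ (i:ℕ) → (f i : ℕ) = N - k + (i:ℕ) := by
  intro i hi
  have g := gapAux hf ((i:ℕ)-(m:ℕ)) m i (by omega)
  have vb := valBound hf i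
  have := i.isLt; have := m.isLt
  omega

private lemma smAdj {f : Fin k → Fin N}
    (h : ∀ m : ℕ, ∀ hm : m + 1 < k, f ⟨m, by omega⟩ < f ⟨m+1, hm⟩) : StrictMono f := by
  have H : ∀ d : ℕ, ∀ x y : Fin k, (y:ℕ) = (x:ℕ) + d + 1 → f x < f y := by
    intro d
    induction d with
    | zero =>
      intro x y hy
      have hb : (x:ℕ) + 1 < k := by have := y.isLt; omega
      have hxy : y = ⟨(x:ℕ)+1, hb⟩ := Fin.ext (by simpa using hy)
      rw [hxy]
      simpa using h (x:ℕ) hb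
    | succ d ih =>
      intro x y hy
      have hm : (x:ℕ)+d+1+1 < k := by have := y.isLt; omega
      have hmid : (x:ℕ)+d+1 < k := by omega
      refine lt_trans (ih x ⟨(x:ℕ)+d+1, hmid⟩ (by simp)) ?_
      have hxy : y = ⟨(x:ℕ)+d+1+1, hm⟩ := Fin.ext (by simp; omega)
      rw [hxy]
      simpa using h ((x:ℕ)+d+1) hm
  intro x y hxy
  rw [Fin.lt_def] at hxy
  exact H ((y:ℕ) - (x:ℕ) - 1) x y (by omega)

private lemma sm_modify {g : Fin k → Fin N} (hg : StrictMono g) (m : Fin k) (v : Fin N)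
    (hlo : ∀ i : Fin k, (i:ℕ) + 1 = (m:ℕ) → g i < v)
    (hhi : ∀ i : Fin k, (i:ℕ) = (m:ℕ) + 1 → v < g i) :
    StrictMono (fun i : Fin k => if (i:ℕ) = (m:ℕ) then v else g i) := by
  refine smAdj (fun n hn => ?_)
  simp only
  split_ifs with hA hB hB
  · omega
  · exact hhi ⟨n+1, hn⟩ (by simp [hA])
  · exact hlo ⟨n, by omega⟩ (by simpa using hB)
  · exact hg (by rw [Fin.lt_def]; simp)

private lemma sm_tail (hkN : k ≤ N) {g : Fin k → Fin N} (hg : StrictMono g) (m : ℕ)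
    (hcross : ∀ i : Fin k, (i:ℕ) = m → (g i : ℕ) < N - k + (m+1)) :
    StrictMono (fun i : Fin k => if (i:ℕ) ≤ m then g i
      else ⟨N - k + (i:ℕ), by have := i.isLt; omega⟩) := by
  refine smAdj (fun n hn => ?_)
  simp only
  split_ifs with hA hB hB
  · exact hg (by rw [Fin.lt_def]; simp)
  · simp at hA hB
    have hnm : n = m := by omega
    rw [Fin.lt_def]
    have := hcross ⟨n, by omega⟩ (by simpa using hnm)
    simpa [hnm] using this
  · simp at hA hB; omega
  · rw [Fin.lt_def]; simp

private lemma key (a b : Fin k → Fin N) (t u : Fin N) (htu : t ≠ u)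
    (hta : ∃ i, a i = t) (hua : ¬ ∃ i, a i = u)
    (hmem : ∀ p, (∃ i, b i = p) ↔ ((∃ i, a i = p) ∧ p ≠ t) ∨ p = u) :
    hammingDist (codeOf a) (codeOf b) = 2 := by
  have hfilter : (Finset.univ.filter fun p => codeOf a p ≠ codeOf b p) = {t, u} := by
    ext p
    simp only [Finset.mem_filter, Finset.mem_univ, true_and, Finset.mem_insert,
      Finset.mem_singleton, codeOf, ne_eq, decide_eq_decide]
    rw [hmem p]
    by_cases hpt : p = t
    · subst hpt
      have hrfl : p = p := rfl
      tauto
    · by_cases hpu : p = u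
      · subst hpu
        have hrfl : p = p := rfl
        tauto
      · tauto
  show (Finset.univ.filter fun p => codeOf a p ≠ codeOf b p).card = 2
  rw [hfilter, Finset.card_pair htu]

private lemma main_aux (a b : Fin k → Fin N) (ha : StrictMono a) (hb : StrictMono b)
    (j : Fin k)
    (h1 : ∀ i, i < j → a i = b i)
    (h2 : (b j : ℕ) = (a j : ℕ) + 1)
    (h3 : ∀ i : Fin k, (j:ℕ) < (i:ℕ) → (b i : ℕ) = N - k + (i:ℕ))
    (h5 : ∀ i : Fin k, (i:ℕ) = (j:ℕ) + 1 → a i = b j)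
    (h4 : ∀ i : Fin k, (j:ℕ) + 1 < (i:ℕ) → (a i : ℕ) = N - k + (i:ℕ)) :
    hammingDist (codeOf a) (codeOf b) = 2 := by
  by_cases hj1 : (j:ℕ) + 1 < k
  · set j1 : Fin k := ⟨(j:ℕ)+1, hj1⟩ with hj1def
    have hbj1 : (b j1 : ℕ) = N - k + ((j:ℕ)+1) := h3 j1 (by simp [hj1def])
    have hblt : b j < b j1 := hb (by rw [Fin.lt_def]; simp [hj1def])
    rw [Fin.lt_def] at hblt
    have haj1 : a j1 = b j := h5 j1 (by simp [hj1def])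
    apply key a b (a j) (b j1)
    · intro h; rw [Fin.ext_iff] at h; omega
    · exact ⟨j, rfl⟩
    · rintro ⟨i, hi⟩
      rw [Fin.ext_iff] at hi
      rcases Nat.lt_trichotomy (i:ℕ) ((j:ℕ)+1) with h | h | h
      · have hle : a i ≤ a j := ha.monotone (by rw [Fin.le_def]; omega)
        rw [Fin.le_def] at hle; omega
      · have := h5 i h
        rw [Fin.ext_iff] at this; omega
      · have := h4 i h
        have := i.isLt; omega
    · intro p
      constructor
      · rintro ⟨i, rfl⟩
        rcases Nat.lt_trichotomy (i:ℕ) (j:ℕ) with h | h | h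
        · have hlt : i < j := by rw [Fin.lt_def]; omega
          have halt : a i < a j := ha hlt
          rw [Fin.lt_def] at halt
          refine Or.inl ⟨⟨i, h1 i hlt⟩, ?_⟩
          intro hEq; rw [Fin.ext_iff] at hEq
          rw [← h1 i hlt] at hEq; omega
        · have : i = j := Fin.ext h
          subst this
          refine Or.inl ⟨⟨j1, haj1⟩, ?_⟩
          intro hEq; rw [Fin.ext_iff] at hEq; omega
        · rcases Nat.lt_trichotomy (i:ℕ) ((j:ℕ)+1) with h' | h' | h'
          · omega
          · have : i = j1 := Fin.ext (by simp [hj1def]; omega)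
            subst this
            exact Or.inr rfl
          · have hai := h4 i h'
            have hbi := h3 i h
            have hab : a i = b i := Fin.ext (by omega)
            refine Or.inl ⟨⟨i, hab⟩, ?_⟩
            have : a j < a i := ha (by rw [Fin.lt_def]; omega)
            rw [Fin.lt_def] at this
            intro hEq; rw [Fin.ext_iff] at hEq; omega
      · rintro (⟨⟨i, rfl⟩, hne⟩ | rfl)
        · rcases Nat.lt_trichotomy (i:ℕ) (j:ℕ) with h | h | h
          · exact ⟨i, (h1 i (by rw [Fin.lt_def]; omega)).symm⟩
          · exact absurd (Fin.ext h ▸ rfl) hne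
          · rcases Nat.lt_trichotomy (i:ℕ) ((j:ℕ)+1) with h' | h' | h'
            · omega
            · exact ⟨j, (h5 i h').symm⟩
            · exact ⟨i, Fin.ext (by have := h4 i h'; have := h3 i h; omega)⟩
        · exact ⟨j1, rfl⟩
  · have hjk : (j:ℕ) + 1 = k := by have := j.isLt; omega
    apply key a b (a j) (b j)
    · intro h; rw [Fin.ext_iff] at h; omega
    · exact ⟨j, rfl⟩
    · rintro ⟨i, hi⟩
      rw [Fin.ext_iff] at hi
      have hle : a i ≤ a j := ha.monotone (by rw [Fin.le_def]; have := i.isLt; omega)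
      rw [Fin.le_def] at hle; omega
    · intro p
      constructor
      · rintro ⟨i, rfl⟩
        rcases Nat.lt_trichotomy (i:ℕ) (j:ℕ) with h | h | h
        · have hlt : i < j := by rw [Fin.lt_def]; omega
          have halt : a i < a j := ha hlt
          rw [Fin.lt_def] at halt
          refine Or.inl ⟨⟨i, h1 i hlt⟩, ?_⟩
          intro hEq; rw [Fin.ext_iff] at hEq
          rw [← h1 i hlt] at hEq; omega
        · have : i = j := Fin.ext h
          subst this
          exact Or.inr rfl
        · have := i.isLt; omega
      · rintro (⟨⟨i, rfl⟩, hne⟩ | rfl)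
        · rcases Nat.lt_trichotomy (i:ℕ) (j:ℕ) with h | h | h
          · exact ⟨i, (h1 i (by rw [Fin.lt_def]; omega)).symm⟩
          · exact absurd (Fin.ext h ▸ rfl) hne
          · have := i.isLt; omega
        · exact ⟨j, rfl⟩

end AltLexAux

/-- If two strictly increasing `k`-tuples (of positions of ones of `k`-of-`N` codes,
`1 ≤ k ≤ N`) are consecutive in the alternating lexicographic order—i.e. `a` precedes
`b` and no strictly increasing tuple lies strictly between them—then the corresponding
codes have Hamming distance exactly `2`. -/
theorem hammingDist_eq_two_of_consecutive_altLex (N k : ℕ) (hk : 1 ≤ k) (hkN : k ≤ N)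
    (a b : Fin k → Fin N) (ha : StrictMono a) (hb : StrictMono b)
    (hab : altLexLT a b)
    (hconsec : ∀ c : Fin k → Fin N, StrictMono c → ¬ (altLexLT a c ∧ altLexLT c b)) :
    hammingDist (codeOf a) (codeOf b) = 2 := by
  obtain ⟨j, hpre, hcmp⟩ := hab
  by_cases hje : Even (j:ℕ)
  · -- EVEN case : a j < b j
    rw [if_pos hje] at hcmp
    rw [Fin.lt_def] at hcmp
    have hjodd1 : ¬ Even ((j:ℕ)+1) := by simp [Nat.even_add_one, hje]
    have hjeven2 : Even ((j:ℕ)+2) := by rcases hje with ⟨m, hm⟩; exact ⟨m+1, by omega⟩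
    -- h2 : b j = a j + 1
    have h2 : (b j : ℕ) = (a j : ℕ) + 1 := by
      by_contra hcon
      refine hconsec
        (fun i : Fin k => if (i:ℕ) = (j:ℕ) then ⟨(a j:ℕ)+1, by have := (b j).isLt; omega⟩ else b i)
        (sm_modify hb j _ ?_ ?_) ⟨⟨j, fun i hij => ?_, ?_⟩, ⟨j, fun i hij => ?_, ?_⟩⟩
      · intro i hi
        have hij : i < j := by rw [Fin.lt_def]; omega
        have h' := ha hij
        rw [Fin.lt_def] at h' ⊢
        have := hpre i hij
        rw [Fin.ext_iff] at this
        simp; omega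
      · intro i hi
        have hji : j < i := by rw [Fin.lt_def]; omega
        have h' := hb hji
        rw [Fin.lt_def] at h' ⊢
        simp; omega
      · simp only
        rw [if_neg (by rw [Fin.lt_def] at hij; omega)]
        exact hpre i hij
      · rw [if_pos hje]
        simp only
        rw [if_pos trivial, Fin.lt_def]
        simp
      · simp only
        rw [if_neg (by rw [Fin.lt_def] at hij; omega)]
      · rw [if_pos hje]
        simp only
        rw [if_pos trivial, Fin.lt_def]
        simp; omega
    -- h5 : a (j+1) = b j
    have h5 : ∀ i : Fin k, (i:ℕ) = (j:ℕ) + 1 → a i = b j := by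
      intro i hi
      have hji : j < i := by rw [Fin.lt_def]; omega
      have hlt := ha hji
      rw [Fin.lt_def] at hlt
      have hval : (a i : ℕ) = (a j : ℕ) + 1 := by
        by_contra hcon
        refine hconsec
          (fun i' : Fin k => if (i':ℕ) = (i:ℕ) then ⟨(a i:ℕ)-1, by have := (a i).isLt; omega⟩ else a i')
          (sm_modify ha i _ ?_ ?_) ⟨⟨i, fun i' hii => ?_, ?_⟩, ⟨j, fun i' hij => ?_, ?_⟩⟩
        · intro i' hi'
          have hij' : i' < i := by rw [Fin.lt_def]; omega
          have h' := ha hij'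
          rw [Fin.lt_def] at h' ⊢
          have hii' : (i':ℕ) = (j:ℕ) := by omega
          have : i' = j := Fin.ext hii'
          subst this
          simp; omega
        · intro i' hi'
          have hii' : i < i' := by rw [Fin.lt_def]; omega
          have h' := ha hii'
          rw [Fin.lt_def] at h' ⊢
          simp; omega
        · simp only
          rw [if_neg (by rw [Fin.lt_def] at hii; omega)]
        · rw [if_neg (by rw [hi]; exact hjodd1)]
          simp only
          rw [if_pos trivial, Fin.lt_def]
          simp; omega
        · simp only
          rw [if_neg (by rw [Fin.lt_def] at hij; omega)]
          exact hpre i' hij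
        · rw [if_pos hje]
          simp only
          rw [if_neg (by omega), Fin.lt_def]
          omega
      rw [Fin.ext_iff]; omega
    -- h3 : tail of b is maximal from j+1 on
    have h3 : ∀ i : Fin k, (j:ℕ) < (i:ℕ) → (b i : ℕ) = N - k + (i:ℕ) := by
      by_cases hj1 : (j:ℕ) + 1 < k
      · have hblt : b j < b ⟨(j:ℕ)+1, hj1⟩ := hb (by rw [Fin.lt_def]; simp)
        rw [Fin.lt_def] at hblt
        have hbase : (b ⟨(j:ℕ)+1, hj1⟩ : ℕ) = N - k + ((j:ℕ)+1) := by
          by_contra hcon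
          have hvb := valBound hb ⟨(j:ℕ)+1, hj1⟩
          simp at hvb
          refine hconsec
            (fun i : Fin k => if (i:ℕ) ≤ (j:ℕ) then b i
              else ⟨N - k + (i:ℕ), by have := i.isLt; omega⟩)
            (sm_tail hkN hb (j:ℕ) ?_) ⟨⟨j, fun i hij => ?_, ?_⟩, ⟨⟨(j:ℕ)+1, hj1⟩, fun i hij => ?_, ?_⟩⟩
          · intro i hi
            have : i = j := Fin.ext hi
            subst this
            omega
          · simp only
            rw [if_pos (by rw [Fin.lt_def] at hij; omega)]
            exact hpre i hij
          · rw [if_pos hje]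
            simp only
            rw [if_pos (le_refl _), Fin.lt_def]
            omega
          · simp only
            rw [Fin.lt_def] at hij
            simp at hij
            rw [if_pos (by omega)]
          · rw [if_neg (by simpa using hjodd1)]
            simp only
            rw [if_neg (by simp), Fin.lt_def]
            simp; omega
        intro i hi
        have := tail_forced hb hkN ⟨(j:ℕ)+1, hj1⟩ hbase i (by simp; omega)
        exact this
      · intro i hi
        have := i.isLt; omega
    -- h4 : tail of a is maximal from j+2 on
    have h4 : ∀ i : Fin k, (j:ℕ) + 1 < (i:ℕ) → (a i : ℕ) = N - k + (i:ℕ) := by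
      by_cases hj2 : (j:ℕ) + 2 < k
      · have hj1 : (j:ℕ) + 1 < k := by omega
        have halt : a ⟨(j:ℕ)+1, hj1⟩ < a ⟨(j:ℕ)+2, hj2⟩ := ha (by rw [Fin.lt_def]; simp)
        rw [Fin.lt_def] at halt
        have hbase : (a ⟨(j:ℕ)+2, hj2⟩ : ℕ) = N - k + ((j:ℕ)+2) := by
          by_contra hcon
          have hvb := valBound ha ⟨(j:ℕ)+2, hj2⟩
          simp at hvb
          refine hconsec
            (fun i : Fin k => if (i:ℕ) ≤ (j:ℕ)+1 then a i
              else ⟨N - k + (i:ℕ), by have := i.isLt; omega⟩)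
            (sm_tail hkN ha ((j:ℕ)+1) ?_) ⟨⟨⟨(j:ℕ)+2, hj2⟩, fun i hij => ?_, ?_⟩, ⟨j, fun i hij => ?_, ?_⟩⟩
          · intro i hi
            have : i = ⟨(j:ℕ)+1, hj1⟩ := Fin.ext (by simpa using hi)
            subst this
            omega
          · simp only
            rw [Fin.lt_def] at hij
            simp at hij
            rw [if_pos (by omega)]
          · rw [if_pos (by simpa using hjeven2)]
            simp only
            rw [if_neg (by simp), Fin.lt_def]
            simp; omega
          · simp only
            rw [if_pos (by rw [Fin.lt_def] at hij; omega)]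
            exact hpre i hij
          · rw [if_pos hje]
            simp only
            rw [if_pos (by omega), Fin.lt_def]
            omega
        intro i hi
        have := tail_forced ha hkN ⟨(j:ℕ)+2, hj2⟩ hbase i (by simp; omega)
        exact this
      · intro i hi
        have := i.isLt; omega
    exact main_aux a b ha hb j hpre h2 h3 h5 h4
  · -- ODD case : b j < a j ; apply main_aux with roles of a and b swapped
    rw [if_neg hje] at hcmp
    rw [Fin.lt_def] at hcmp
    have hjeven1 : Even ((j:ℕ)+1) := Nat.even_add_one.mpr hje
    have hjodd2 : ¬ Even ((j:ℕ)+2) := by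
      rw [show (j:ℕ)+2 = ((j:ℕ)+1)+1 by omega, Nat.even_add_one]
      simpa using hjeven1
    have hpre' : ∀ i, i < j → b i = a i := fun i hi => (hpre i hi).symm
    -- h2 : a j = b j + 1
    have h2 : (a j : ℕ) = (b j : ℕ) + 1 := by
      by_contra hcon
      refine hconsec
        (fun i : Fin k => if (i:ℕ) = (j:ℕ) then ⟨(b j:ℕ)+1, by have := (a j).isLt; omega⟩ else a i)
        (sm_modify ha j _ ?_ ?_) ⟨⟨j, fun i hij => ?_, ?_⟩, ⟨j, fun i hij => ?_, ?_⟩⟩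
      · intro i hi
        have hij : i < j := by rw [Fin.lt_def]; omega
        have h' := hb hij
        rw [Fin.lt_def] at h' ⊢
        have := hpre i hij
        rw [Fin.ext_iff] at this
        simp; omega
      · intro i hi
        have hji : j < i := by rw [Fin.lt_def]; omega
        have h' := ha hji
        rw [Fin.lt_def] at h' ⊢
        simp; omega
      · simp only
        rw [if_neg (by rw [Fin.lt_def] at hij; omega)]
      · rw [if_neg hje]
        simp only
        rw [if_pos trivial, Fin.lt_def]
        simp; omega
      · simp only
        rw [if_neg (by rw [Fin.lt_def] at hij; omega)]
        exact hpre i hij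
      · rw [if_neg hje]
        simp only
        rw [if_pos trivial, Fin.lt_def]
        simp
    -- h5 : b (j+1) = b j + 1 = a j
    have h5 : ∀ i : Fin k, (i:ℕ) = (j:ℕ) + 1 → b i = a j := by
      intro i hi
      have hji : j < i := by rw [Fin.lt_def]; omega
      have hlt := hb hji
      rw [Fin.lt_def] at hlt
      have hval : (b i : ℕ) = (b j : ℕ) + 1 := by
        by_contra hcon
        refine hconsec
          (fun i' : Fin k => if (i':ℕ) = (i:ℕ) then ⟨(b i:ℕ)-1, by have := (b i).isLt; omega⟩ else b i')
          (sm_modify hb i _ ?_ ?_) ⟨⟨j, fun i' hij => ?_, ?_⟩, ⟨i, fun i' hii => ?_, ?_⟩⟩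
        · intro i' hi'
          have hij' : i' < i := by rw [Fin.lt_def]; omega
          have h' := hb hij'
          rw [Fin.lt_def] at h' ⊢
          have hii' : (i':ℕ) = (j:ℕ) := by omega
          have : i' = j := Fin.ext hii'
          subst this
          simp; omega
        · intro i' hi'
          have hii' : i < i' := by rw [Fin.lt_def]; omega
          have h' := hb hii'
          rw [Fin.lt_def] at h' ⊢
          simp; omega
        · simp only
          rw [if_neg (by rw [Fin.lt_def] at hij; omega)]
          exact hpre i' hij
        · rw [if_neg hje]
          simp only
          rw [if_neg (by omega), Fin.lt_def]
          omega
        · simp only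
          rw [if_neg (by rw [Fin.lt_def] at hii; omega)]
        · rw [if_pos (by rw [hi]; exact hjeven1)]
          simp only
          rw [if_pos trivial, Fin.lt_def]
          simp; omega
      rw [Fin.ext_iff]; omega
    -- h3 : tail of a is maximal from j+1 on
    have h3 : ∀ i : Fin k, (j:ℕ) < (i:ℕ) → (a i : ℕ) = N - k + (i:ℕ) := by
      by_cases hj1 : (j:ℕ) + 1 < k
      · have halt : a j < a ⟨(j:ℕ)+1, hj1⟩ := ha (by rw [Fin.lt_def]; simp)
        rw [Fin.lt_def] at halt
        have hbase : (a ⟨(j:ℕ)+1, hj1⟩ : ℕ) = N - k + ((j:ℕ)+1) := by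
          by_contra hcon
          have hvb := valBound ha ⟨(j:ℕ)+1, hj1⟩
          simp at hvb
          refine hconsec
            (fun i : Fin k => if (i:ℕ) ≤ (j:ℕ) then a i
              else ⟨N - k + (i:ℕ), by have := i.isLt; omega⟩)
            (sm_tail hkN ha (j:ℕ) ?_) ⟨⟨⟨(j:ℕ)+1, hj1⟩, fun i hij => ?_, ?_⟩, ⟨j, fun i hij => ?_, ?_⟩⟩
          · intro i hi
            have : i = j := Fin.ext hi
            subst this
            omega
          · simp only
            rw [Fin.lt_def] at hij
            simp at hij
            rw [if_pos (by omega)]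
          · rw [if_pos (by simpa using hjeven1)]
            simp only
            rw [if_neg (by simp), Fin.lt_def]
            simp; omega
          · simp only
            rw [if_pos (by rw [Fin.lt_def] at hij; omega)]
            exact hpre i hij
          · rw [if_neg hje]
            simp only
            rw [if_pos (le_refl _), Fin.lt_def]
            omega
        intro i hi
        exact tail_forced ha hkN ⟨(j:ℕ)+1, hj1⟩ hbase i (by simp; omega)
      · intro i hi
        have := i.isLt; omega
    -- h4 : tail of b is maximal from j+2 on
    have h4 : ∀ i : Fin k, (j:ℕ) + 1 < (i:ℕ) → (b i : ℕ) = N - k + (i:ℕ) := by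
      by_cases hj2 : (j:ℕ) + 2 < k
      · have hj1 : (j:ℕ) + 1 < k := by omega
        have hblt : b ⟨(j:ℕ)+1, hj1⟩ < b ⟨(j:ℕ)+2, hj2⟩ := hb (by rw [Fin.lt_def]; simp)
        rw [Fin.lt_def] at hblt
        have hbase : (b ⟨(j:ℕ)+2, hj2⟩ : ℕ) = N - k + ((j:ℕ)+2) := by
          by_contra hcon
          have hvb := valBound hb ⟨(j:ℕ)+2, hj2⟩
          simp at hvb
          refine hconsec
            (fun i : Fin k => if (i:ℕ) ≤ (j:ℕ)+1 then b i
              else ⟨N - k + (i:ℕ), by have := i.isLt; omega⟩)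
            (sm_tail hkN hb ((j:ℕ)+1) ?_) ⟨⟨j, fun i hij => ?_, ?_⟩, ⟨⟨(j:ℕ)+2, hj2⟩, fun i hij => ?_, ?_⟩⟩
          · intro i hi
            have : i = ⟨(j:ℕ)+1, hj1⟩ := Fin.ext (by simpa using hi)
            subst this
            omega
          · simp only
            rw [if_pos (by rw [Fin.lt_def] at hij; omega)]
            exact hpre i hij
          · rw [if_neg hje]
            simp only
            rw [if_pos (by omega), Fin.lt_def]
            omega
          · simp only
            rw [Fin.lt_def] at hij
            simp at hij
            rw [if_pos (by omega)]
          · rw [if_neg (by simpa using hjodd2)]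
            simp only
            rw [if_neg (by simp), Fin.lt_def]
            simp; omega
        intro i hi
        exact tail_forced hb hkN ⟨(j:ℕ)+2, hj2⟩ hbase i (by simp; omega)
      · intro i hi
        have := i.isLt; omega
    rw [hammingDist_comm]
    exact main_aux b a hb ha j hpre' h2 h3 h5 h4
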